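/- For r ≥ 2 and t ≥ 2, the total mutual-visibility number and dual mutual-visibility number of the glued t-ary tree GT(r,t) both equal t^{r−1}(t − 1), and in each case the number of maximum such sets equals t^{t^{r−1}}. -/

import Mathlib

open SimpleGraph

/-- Two vertices `u` and `v` are `S`-visible: there exists a shortest `u,v`-path
whose intersection with `S` is contained in `{u, v}`. -/
def isVisible {V : Type*} (G : SimpleGraph V) (S : Set V) (u v : V) : Prop :=
  ∃ p : G.Walk u v, p.IsPath ∧ p.length = G.dist u v ∧
    ∀ w ∈ p.support, w ∈ S → w = u ∨ w = v

/-- Two vertices `u` and `v` are `S`-positionable: every shortest `u,v`-path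
has its intersection with `S` contained in `{u, v}`. -/
def isPositionable {V : Type*} (G : SimpleGraph V) (S : Set V) (u v : V) : Prop :=
  ∀ p : G.Walk u v, p.IsPath → p.length = G.dist u v →
    ∀ w ∈ p.support, w ∈ S → w = u ∨ w = v

def isMVSet {V : Type*} (G : SimpleGraph V) (S : Set V) : Prop :=
  ∀ u ∈ S, ∀ v ∈ S, isVisible G S u v

def isOuterMVSet {V : Type*} (G : SimpleGraph V) (S : Set V) : Prop :=
  isMVSet G S ∧ ∀ u ∈ S, ∀ v ∉ S, isVisible G S u v

def isDualMVSet {V : Type*} (G : SimpleGraph V) (S : Set V) : Prop :=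
  isMVSet G S ∧ ∀ u ∉ S, ∀ v ∉ S, isVisible G S u v

def isTotalMVSet {V : Type*} (G : SimpleGraph V) (S : Set V) : Prop :=
  ∀ u v : V, isVisible G S u v

def isGPSet {V : Type*} (G : SimpleGraph V) (S : Set V) : Prop :=
  ∀ u ∈ S, ∀ v ∈ S, isPositionable G S u v

def isOuterGPSet {V : Type*} (G : SimpleGraph V) (S : Set V) : Prop :=
  isGPSet G S ∧ ∀ u ∈ S, ∀ v ∉ S, isPositionable G S u v

def isDualGPSet {V : Type*} (G : SimpleGraph V) (S : Set V) : Prop :=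
  isGPSet G S ∧ ∀ u ∉ S, ∀ v ∉ S, isPositionable G S u v

def isTotalGPSet {V : Type*} (G : SimpleGraph V) (S : Set V) : Prop :=
  ∀ u v : V, isPositionable G S u v

/-- Vertices of the generalized glued `t`-ary tree obtained from `n` copies of
the perfect `t`-ary tree of depth `r`: an internal vertex of copy `i` is encoded
as the list of child-choices from the root (length `< r`), and a quasi-leaf
(identified leaf) is encoded as such a list of length exactly `r`. -/
abbrev gluedVert (r n t : ℕ) : Type :=
  (Fin n × {l : List (Fin t) // l.length < r}) ⊕ {l : List (Fin t) // l.length = r}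

def gluedAdj (r n t : ℕ) : gluedVert r n t → gluedVert r n t → Prop
  | Sum.inl (i, s), Sum.inl (j, s') => i = j ∧ ∃ b, s'.val = s.val ++ [b]
  | Sum.inl (_, s), Sum.inr l => ∃ b, l.val = s.val ++ [b]
  | Sum.inr _, _ => False

/-- The generalized glued `t`-ary tree on `n` copies of the perfect `t`-ary tree
of depth `r`.  `gluedTree r 2 2` is the glued binary tree `GT(r)`,
`gluedTree r 2 t` is the glued `t`-ary tree `GT(r,t)`, and `gluedTree r n 2`
is the generalized glued binary tree `GT_r^(n)`. -/
def gluedTree (r n t : ℕ) : SimpleGraph (gluedVert r n t) :=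
  SimpleGraph.fromRel (gluedAdj r n t)

/-- The set of quasi-leaves. -/
def quasiLeaves (r n t : ℕ) : Set (gluedVert r n t) := {x | ∃ l, x = Sum.inr l}

/-- The vertex set of the `i`-th copy `T_r^(i)` of the perfect `t`-ary tree
(its internal vertices together with all quasi-leaves). -/
def copySet (r n t : ℕ) (i : Fin n) : Set (gluedVert r n t) :=
  {x | (∃ s, x = Sum.inl (i, s)) ∨ x ∈ quasiLeaves r n t}


namespace GT
variable {r t : ℕ}

lemma adj_inl_inl {i j : Fin 2} {s s' : {l : List (Fin t) // l.length < r}} :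
    (gluedTree r 2 t).Adj (Sum.inl (i,s)) (Sum.inl (j,s')) ↔
      i = j ∧ ((∃ b, s'.val = s.val ++ [b]) ∨ (∃ b, s.val = s'.val ++ [b])) := by
  rw [gluedTree, SimpleGraph.fromRel_adj]
  constructor
  · rintro ⟨hne, ⟨h1, h2⟩ | ⟨h1, h2⟩⟩
    · exact ⟨h1, Or.inl h2⟩
    · exact ⟨h1.symm, Or.inr h2⟩
  · rintro ⟨rfl, ⟨b, hb⟩ | ⟨b, hb⟩⟩
    · refine ⟨?_, Or.inl ⟨rfl, b, hb⟩⟩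
      intro hx
      have := congrArg (fun x => (Sum.elim (fun y : Fin 2 × {l : List (Fin t) // l.length < r} => y.2.val.length) (fun y => y.val.length)) x) hx
      simp [hb] at this
    · refine ⟨?_, Or.inr ⟨rfl, b, hb⟩⟩
      intro hx
      have := congrArg (fun x => (Sum.elim (fun y : Fin 2 × {l : List (Fin t) // l.length < r} => y.2.val.length) (fun y => y.val.length)) x) hx
      simp [hb] at this

lemma adj_inl_inr {i : Fin 2} {s : {l : List (Fin t) // l.length < r}}
    {l : {l : List (Fin t) // l.length = r}} :
    (gluedTree r 2 t).Adj (Sum.inl (i,s)) (Sum.inr l) ↔ ∃ b, l.val = s.val ++ [b] := by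
  rw [gluedTree, SimpleGraph.fromRel_adj]
  constructor
  · rintro ⟨hne, h | h⟩
    · exact h
    · exact h.elim
  · rintro ⟨b, hb⟩
    exact ⟨by simp, Or.inl ⟨b, hb⟩⟩

lemma adj_inr_inr {l l' : {l : List (Fin t) // l.length = r}} :
    ¬ (gluedTree r 2 t).Adj (Sum.inr l) (Sum.inr l') := by
  rw [gluedTree, SimpleGraph.fromRel_adj]
  rintro ⟨hne, h | h⟩ <;> exact h

lemma adj_inr_inl {i : Fin 2} {s : {l : List (Fin t) // l.length < r}}
    {l : {l : List (Fin t) // l.length = r}} :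
    (gluedTree r 2 t).Adj (Sum.inr l) (Sum.inl (i,s)) ↔ ∃ b, l.val = s.val ++ [b] := by
  rw [SimpleGraph.adj_comm]; exact adj_inl_inr

/-- neighbors of a leaf -/
lemma adj_inr_iff {l : {l : List (Fin t) // l.length = r}} {z : gluedVert r 2 t} :
    (gluedTree r 2 t).Adj z (Sum.inr l) ↔
      ∃ (i : Fin 2) (s : {m : List (Fin t) // m.length < r}) (b : Fin t),
        z = Sum.inl (i, s) ∧ l.val = s.val ++ [b] := by
  constructor
  · intro h
    match z with
    | Sum.inl (i, s) =>
      obtain ⟨b, hb⟩ := adj_inl_inr.mp h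
      exact ⟨i, s, b, rfl, hb⟩
    | Sum.inr l' => exact absurd h adj_inr_inr
  · rintro ⟨i, s, b, rfl, hb⟩
    exact adj_inl_inr.mpr ⟨b, hb⟩

end GT

section Helpers
open SimpleGraph Walk
variable {V : Type*} {G : SimpleGraph V} {u v : V}

lemma walk_len2 (p : G.Walk u v) (h : p.length = 2) :
    ∃ z, G.Adj u z ∧ G.Adj z v ∧ p.support = [u, z, v] := by
  match p with
  | .nil => simp at h
  | .cons h1 .nil => simp at h
  | .cons h1 (.cons h2 .nil) => exact ⟨_, h1, h2, by simp⟩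
  | .cons h1 (.cons h2 (.cons h3 q)) => simp [Nat.add_eq_zero] at h

lemma walk_len3 (p : G.Walk u v) (h : p.length = 3) :
    ∃ z1 z2, G.Adj u z1 ∧ G.Adj z1 z2 ∧ G.Adj z2 v ∧ p.support = [u, z1, z2, v] := by
  match p with
  | .nil => simp at h
  | .cons h1 .nil => simp at h
  | .cons h1 (.cons h2 .nil) => simp at h
  | .cons h1 (.cons h2 (.cons h3 .nil)) => exact ⟨_, _, h1, h2, h3, by simp⟩
  | .cons h1 (.cons h2 (.cons h3 (.cons h4 q))) => simp [Nat.add_eq_zero] at h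

lemma dist_eq_two (hne : u ≠ v) (hnadj : ¬ G.Adj u v) {z : V}
    (h1 : G.Adj u z) (h2 : G.Adj z v) : G.dist u v = 2 := by
  have hle : G.dist u v ≤ 2 := by
    have := SimpleGraph.dist_le (Walk.cons h1 (Walk.cons h2 Walk.nil))
    simpa using this
  have hreach : G.Reachable u v := ⟨Walk.cons h1 (Walk.cons h2 Walk.nil)⟩
  have h0 : G.dist u v ≠ 0 := by
    simpa [hreach.dist_eq_zero_iff] using hne
  have h1' : G.dist u v ≠ 1 := fun hc => hnadj (SimpleGraph.dist_eq_one_iff_adj.mp hc)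
  omega

lemma dist_eq_three (hne : u ≠ v) (hnadj : ¬ G.Adj u v)
    (hnc : ∀ z, G.Adj u z → G.Adj z v → False) {z1 z2 : V}
    (h1 : G.Adj u z1) (h2 : G.Adj z1 z2) (h3 : G.Adj z2 v) : G.dist u v = 3 := by
  have hle : G.dist u v ≤ 3 := by
    have := SimpleGraph.dist_le (Walk.cons h1 (Walk.cons h2 (Walk.cons h3 Walk.nil)))
    simpa using this
  have hreach : G.Reachable u v := ⟨Walk.cons h1 (Walk.cons h2 (Walk.cons h3 Walk.nil))⟩
  have h0 : G.dist u v ≠ 0 := by simpa [hreach.dist_eq_zero_iff] using hne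
  have h1' : G.dist u v ≠ 1 := fun hc => hnadj (SimpleGraph.dist_eq_one_iff_adj.mp hc)
  have h2' : G.dist u v ≠ 2 := by
    intro hc
    obtain ⟨p, hp⟩ := hreach.exists_walk_length_eq_dist
    rw [hc] at hp
    obtain ⟨z, ha, hb, -⟩ := walk_len2 p hp
    exact hnc z ha hb
  omega

/-- From visibility at distance 2: a common neighbor avoiding `S`. -/
lemma visible_two {S : Set V} (h : isVisible G S u v) (hd : G.dist u v = 2) :
    ∃ z, G.Adj u z ∧ G.Adj z v ∧ (z ∈ S → z = u ∨ z = v) := by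
  obtain ⟨p, hp, hlen, hS⟩ := h
  rw [hd] at hlen
  obtain ⟨z, h1, h2, hsup⟩ := walk_len2 p hlen
  exact ⟨z, h1, h2, fun hz => hS z (by rw [hsup]; simp) hz⟩

lemma visible_three {S : Set V} (h : isVisible G S u v) (hd : G.dist u v = 3) :
    ∃ z1 z2, G.Adj u z1 ∧ G.Adj z1 z2 ∧ G.Adj z2 v ∧
      (z1 ∈ S → z1 = u ∨ z1 = v) ∧ (z2 ∈ S → z2 = u ∨ z2 = v) := by
  obtain ⟨p, hp, hlen, hS⟩ := h
  rw [hd] at hlen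
  obtain ⟨z1, z2, h1, h2, h3, hsup⟩ := walk_len3 p hlen
  exact ⟨z1, z2, h1, h2, h3, fun hz => hS z1 (by rw [hsup]; simp) hz,
    fun hz => hS z2 (by rw [hsup]; simp) hz⟩

end Helpers
namespace GT
open SimpleGraph
variable {r t : ℕ}

lemma snoc_inj {α : Type*} {s s' : List α} {a b : α} (h : s ++ [a] = s' ++ [b]) :
    s = s' ∧ a = b := by
  obtain ⟨h1, h2⟩ := List.append_inj' h (by simp)
  exact ⟨h1, by simpa using h2⟩

lemma cn_siblings {i : Fin 2} {s : List (Fin t)} {a b : Fin t} (hab : a ≠ b)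
    {h1 : (s ++ [a]).length < r} {h2 : (s ++ [b]).length < r} (hs : s.length < r)
    {z : gluedVert r 2 t}
    (hz1 : (gluedTree r 2 t).Adj z (Sum.inl (i, ⟨s ++ [a], h1⟩)))
    (hz2 : (gluedTree r 2 t).Adj z (Sum.inl (i, ⟨s ++ [b], h2⟩))) :
    z = Sum.inl (i, ⟨s, hs⟩) := by
  match z with
  | Sum.inl (k, u) =>
    rw [adj_inl_inl] at hz1 hz2
    obtain ⟨rfl, hz1⟩ := hz1
    obtain ⟨-, hz2⟩ := hz2
    rcases hz1 with ⟨c, hc⟩ | ⟨c, hc⟩ <;> rcases hz2 with ⟨d, hd⟩ | ⟨d, hd⟩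
    · -- s++[a] = u++[c], s++[b] = u++[d]
      obtain ⟨rfl, rfl⟩ := snoc_inj hc.symm
      simp
    · have hc' := congrArg List.length hc
      have hd' := congrArg List.length hd
      simp at hc' hd'; omega
    · have hc' := congrArg List.length hc
      have hd' := congrArg List.length hd
      simp at hc' hd'; omega
    · -- u = s++[a]++[c] = s++[b]++[d]
      rw [hd] at hc
      obtain ⟨h', -⟩ := snoc_inj hc
      obtain ⟨-, h''⟩ := snoc_inj h'
      exact absurd h''.symm hab
  | Sum.inr l =>
    obtain ⟨c, hc⟩ := adj_inr_inl.mp hz1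
    obtain ⟨d, hd⟩ := adj_inr_inl.mp hz2
    rw [hd] at hc
    obtain ⟨h', -⟩ := snoc_inj hc
    obtain ⟨-, h''⟩ := snoc_inj h'
    exact absurd h''.symm hab

lemma cn_parent_leaf {i : Fin 2} {w₀ : List (Fin t)} {e c : Fin t}
    {h₀ : w₀.length < r} {hlen : (w₀ ++ [e] ++ [c]).length = r}
    (h₁ : (w₀ ++ [e]).length < r) {z : gluedVert r 2 t}
    (hz1 : (gluedTree r 2 t).Adj z (Sum.inl (i, ⟨w₀, h₀⟩)))
    (hz2 : (gluedTree r 2 t).Adj z (Sum.inr ⟨w₀ ++ [e] ++ [c], hlen⟩)) :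
    z = Sum.inl (i, ⟨w₀ ++ [e], h₁⟩) := by
  match z with
  | Sum.inl (k, u) =>
    rw [adj_inl_inl] at hz1
    obtain ⟨rfl, -⟩ := hz1
    obtain ⟨d, hd⟩ := adj_inl_inr.mp hz2
    obtain ⟨h', -⟩ := snoc_inj hd.symm
    congr 2
    exact Subtype.ext h'
  | Sum.inr l => exact absurd hz2 adj_inr_inr

lemma cn_mirror {i j : Fin 2} (hij : i ≠ j) {w : List (Fin t)} {hw : w.length < r}
    {z : gluedVert r 2 t}
    (hz1 : (gluedTree r 2 t).Adj z (Sum.inl (i, ⟨w, hw⟩)))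
    (hz2 : (gluedTree r 2 t).Adj z (Sum.inl (j, ⟨w, hw⟩))) :
    ∃ (c : Fin t) (h : (w ++ [c]).length = r), z = Sum.inr ⟨w ++ [c], h⟩ := by
  match z with
  | Sum.inl (k, u) =>
    rw [adj_inl_inl] at hz1 hz2
    exact absurd (hz1.1.symm.trans hz2.1) hij
  | Sum.inr l =>
    obtain ⟨c, hc⟩ := adj_inr_inl.mp hz1
    refine ⟨c, by rw [← hc]; exact l.prop, ?_⟩
    congr 1
    exact Subtype.ext hc

lemma cn_cross_none {i j : Fin 2} (hij : i ≠ j) {w₀ : List (Fin t)} {e : Fin t}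
    {h₀ : w₀.length < r} {h₁ : (w₀ ++ [e]).length < r} {z : gluedVert r 2 t}
    (hz1 : (gluedTree r 2 t).Adj z (Sum.inl (i, ⟨w₀, h₀⟩)))
    (hz2 : (gluedTree r 2 t).Adj z (Sum.inl (j, ⟨w₀ ++ [e], h₁⟩))) : False := by
  match z with
  | Sum.inl (k, u) =>
    rw [adj_inl_inl] at hz1 hz2
    exact hij (hz1.1.symm.trans hz2.1)
  | Sum.inr l =>
    obtain ⟨c, hc⟩ := adj_inr_inl.mp hz1
    obtain ⟨d, hd⟩ := adj_inr_inl.mp hz2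
    rw [hd] at hc
    have := congrArg List.length hc
    simp at this

lemma cn_sib_mirror_none {i j : Fin 2} (hij : i ≠ j) {w₀ : List (Fin t)} {e b : Fin t}
    (heb : e ≠ b) {h₁ : (w₀ ++ [e]).length < r} {h₂ : (w₀ ++ [b]).length < r}
    {z : gluedVert r 2 t}
    (hz1 : (gluedTree r 2 t).Adj z (Sum.inl (j, ⟨w₀ ++ [e], h₁⟩)))
    (hz2 : (gluedTree r 2 t).Adj z (Sum.inl (i, ⟨w₀ ++ [b], h₂⟩))) : False := by
  match z with
  | Sum.inl (k, u) =>
    rw [adj_inl_inl] at hz1 hz2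
    exact hij (hz2.1.symm.trans hz1.1)
  | Sum.inr l =>
    obtain ⟨c, hc⟩ := adj_inr_inl.mp hz1
    obtain ⟨d, hd⟩ := adj_inr_inl.mp hz2
    rw [hd] at hc
    obtain ⟨h', -⟩ := snoc_inj hc
    obtain ⟨-, h''⟩ := snoc_inj h'
    exact heb h''.symm

lemma nadj_inl_cross {i j : Fin 2} (hij : i ≠ j) {s s' : {l : List (Fin t) // l.length < r}} :
    ¬ (gluedTree r 2 t).Adj (Sum.inl (i, s)) (Sum.inl (j, s')) := fun h =>
  hij (adj_inl_inl.mp h).1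

lemma nadj_same_len {i j : Fin 2} {s s' : {l : List (Fin t) // l.length < r}}
    (hlen : s.val.length = s'.val.length) :
    ¬ (gluedTree r 2 t).Adj (Sum.inl (i, s)) (Sum.inl (j, s')) := by
  intro h
  obtain ⟨-, ⟨b, hb⟩ | ⟨b, hb⟩⟩ := adj_inl_inl.mp h <;>
    · have := congrArg List.length hb
      simp at this; omega

lemma nadj_inl_inr_len {i : Fin 2} {s : {l : List (Fin t) // l.length < r}}
    {l : {l : List (Fin t) // l.length = r}} (h : l.val.length ≠ s.val.length + 1) :
    ¬ (gluedTree r 2 t).Adj (Sum.inl (i, s)) (Sum.inr l) := by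
  intro hadj
  obtain ⟨b, hb⟩ := adj_inl_inr.mp hadj
  have := congrArg List.length hb
  simp at this; omega

end GT
namespace GT
open SimpleGraph
variable {r t : ℕ}

lemma reach_root {i : Fin 2} (s : List (Fin t)) (hs : s.length < r) (h0 : 0 < r) :
    (gluedTree r 2 t).Reachable (Sum.inl (i, ⟨s, hs⟩)) (Sum.inl (i, ⟨[], h0⟩)) := by
  induction s using List.reverseRecOn with
  | nil => rfl
  | append_singleton l a ih =>
    have hl : l.length < r := by simp at hs; omega
    have hadj : (gluedTree r 2 t).Adj (Sum.inl (i, ⟨l, hl⟩)) (Sum.inl (i, ⟨l ++ [a], hs⟩)) :=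
      adj_inl_inl.mpr ⟨rfl, Or.inl ⟨a, rfl⟩⟩
    exact hadj.reachable.symm.trans (ih hl)

lemma reach_leaf_root (l : {l : List (Fin t) // l.length = r}) (h0 : 0 < r) (i : Fin 2) :
    (gluedTree r 2 t).Reachable (Sum.inr l) (Sum.inl (i, ⟨[], h0⟩)) := by
  have hne : l.val ≠ [] := by
    intro h; have := l.prop; rw [h] at this; simp at this; omega
  have hw : l.val.dropLast.length < r := by
    have := l.prop; simp [List.length_dropLast]; omega
  have hadj : (gluedTree r 2 t).Adj (Sum.inl (i, ⟨l.val.dropLast, hw⟩)) (Sum.inr l) :=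
    adj_inl_inr.mpr ⟨l.val.getLast hne, (List.dropLast_append_getLast hne).symm⟩
  exact hadj.reachable.symm.trans (reach_root _ _ h0)

lemma reach_inl_leaf (ht0 : 0 < t) :
    ∀ (n : ℕ) (i : Fin 2) (s : List (Fin t)) (hs : s.length < r), r - s.length ≤ n →
    ∃ l : {l : List (Fin t) // l.length = r},
      (gluedTree r 2 t).Reachable (Sum.inl (i, ⟨s, hs⟩)) (Sum.inr l) := by
  intro n
  induction n with
  | zero => intro i s hs h; omega
  | succ n ih =>
    intro i s hs h
    by_cases hc : s.length + 1 = r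
    · refine ⟨⟨s ++ [(⟨0, ht0⟩ : Fin t)], by simp [hc]⟩, SimpleGraph.Adj.reachable ?_⟩
      exact adj_inl_inr.mpr ⟨_, rfl⟩
    · have hs' : (s ++ [(⟨0, ht0⟩ : Fin t)]).length < r := by simp; omega
      obtain ⟨l, hl⟩ := ih i (s ++ [(⟨0, ht0⟩ : Fin t)]) hs' (by simp; omega)
      refine ⟨l, SimpleGraph.Reachable.trans (SimpleGraph.Adj.reachable ?_) hl⟩
      exact adj_inl_inl.mpr ⟨rfl, Or.inl ⟨_, rfl⟩⟩

lemma glued_connected (h0 : 0 < r) (ht0 : 0 < t) : (gluedTree r 2 t).Connected := by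
  rw [connected_iff]
  refine ⟨fun x y => ?_, ⟨Sum.inl (0, ⟨[], h0⟩)⟩⟩
  suffices h : ∀ x : gluedVert r 2 t,
      (gluedTree r 2 t).Reachable x (Sum.inl (0, ⟨([] : List (Fin t)), h0⟩)) from (h x).trans (h y).symm
  intro z
  match z with
  | Sum.inl (i, ⟨s, hs⟩) =>
    obtain ⟨l, hl⟩ := reach_inl_leaf ht0 (r - s.length) i s hs le_rfl
    exact hl.trans (reach_leaf_root l h0 0)
  | Sum.inr l => exact reach_leaf_root l h0 0
end GT

namespace GT
open SimpleGraph
variable {r t : ℕ}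

lemma fin2_cases (k i : Fin 2) : k = i ∨ k = i + 1 := by revert k i; decide

lemma fin2_ne (i : Fin 2) : i ≠ i + 1 := by revert i; decide

lemma inl_ne_of_len {i k : Fin 2} {u v : {l : List (Fin t) // l.length < r}}
    (h : u.val.length ≠ v.val.length) :
    (Sum.inl (i, u) : gluedVert r 2 t) ≠ Sum.inl (k, v) := by
  intro hc
  simp only [Sum.inl.injEq, Prod.mk.injEq] at hc
  exact h (by rw [hc.2])

theorem dual_no_internal (hr : 2 ≤ r) (ht : 2 ≤ t) {S : Set (gluedVert r 2 t)}
    (hS : isDualMVSet (gluedTree r 2 t) S) (i : Fin 2)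
    (s : {l : List (Fin t) // l.length < r}) : Sum.inl (i, s) ∉ S := by
  classical
  have h0t : 0 < t := by omega
  have h1t : 1 < t := by omega
  intro hmem
  -- the set of depths of internal vertices in S
  set P : ℕ → Prop := fun d => ∃ (k : Fin 2) (u : {l : List (Fin t) // l.length < r}),
    u.val.length = d ∧ Sum.inl (k, u) ∈ S with hP
  have hPex : P s.val.length := ⟨i, s, rfl, hmem⟩
  have hPbd : ∀ m, P m → m ≤ r := fun m ⟨k, u, hu, _⟩ => by omega
  set D := Nat.findGreatest P r with hD
  have hspec : P D := Nat.findGreatest_spec (hPbd _ hPex) hPex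
  have hmax : ∀ m, P m → m ≤ D := fun m hm => Nat.le_findGreatest (hPbd m hm) hm
  obtain ⟨k, ⟨w, hw⟩, hwd, hxS⟩ := hspec
  set j : Fin 2 := k + 1 with hj
  have hkj : k ≠ j := fin2_ne k
  by_cases hcase : w.length + 1 < r
  · -- maximal-depth internal vertex has two internal children, both outside S
    have hlen0 : (w ++ [(⟨0, h0t⟩ : Fin t)]).length < r := by simp; omega
    have hlen1 : (w ++ [(⟨1, h1t⟩ : Fin t)]).length < r := by simp; omega
    set c1 : gluedVert r 2 t := Sum.inl (k, ⟨w ++ [⟨0, h0t⟩], hlen0⟩) with hc1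
    set c2 : gluedVert r 2 t := Sum.inl (k, ⟨w ++ [⟨1, h1t⟩], hlen1⟩) with hc2
    have hwD : w.length = D := hwd
    have hc1S : c1 ∉ S := fun hc => by
      have := hmax (w.length + 1) ⟨k, ⟨w ++ [⟨0, h0t⟩], hlen0⟩, by simp, hc⟩; omega
    have hc2S : c2 ∉ S := fun hc => by
      have := hmax (w.length + 1) ⟨k, ⟨w ++ [⟨1, h1t⟩], hlen1⟩, by simp, hc⟩; omega
    have h01 : (⟨0, h0t⟩ : Fin t) ≠ ⟨1, h1t⟩ := by simp
    have hne : c1 ≠ c2 := by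
      intro hc
      simp only [hc1, hc2, Sum.inl.injEq, Prod.mk.injEq, Subtype.mk.injEq] at hc
      exact h01 (snoc_inj hc.2).2
    have hvis := hS.2 c1 hc1S c2 hc2S
    have hd2 : (gluedTree r 2 t).dist c1 c2 = 2 := by
      refine dist_eq_two (z := Sum.inl (k, ⟨w, hw⟩)) hne (nadj_same_len (by simp)) ?_ ?_
      · exact (adj_inl_inl.mpr ⟨rfl, Or.inl ⟨_, rfl⟩⟩ :
          (gluedTree r 2 t).Adj (Sum.inl (k, ⟨w, hw⟩)) c1).symm
      · exact adj_inl_inl.mpr ⟨rfl, Or.inl ⟨_, rfl⟩⟩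
    obtain ⟨z, hz1, hz2, hzS⟩ := visible_two hvis hd2
    have hzx : z = Sum.inl (k, ⟨w, hw⟩) := cn_siblings h01 hw hz1.symm hz2
    subst hzx
    rcases hzS hxS with h | h
    · exact absurd h.symm (inl_ne_of_len (by simp))
    · exact absurd h.symm (inl_ne_of_len (by simp))
  · -- the maximal depth is r - 1
    have hwr : w.length + 1 = r := by omega
    have hwne : w ≠ [] := by rintro rfl; simp at hwr; omega
    obtain ⟨w₀, e, rfl⟩ : ∃ w₀ e, w = w₀ ++ [e] :=
      ⟨_, _, (List.dropLast_append_getLast hwne).symm⟩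
    have hw₀ : w₀.length < r := by simp at hwr; omega
    have hw₀1 : w₀.length + 1 + 1 = r := by simp at hwr; omega
    set x : gluedVert r 2 t := Sum.inl (k, ⟨w₀ ++ [e], hw⟩) with hx
    set p : gluedVert r 2 t := Sum.inl (k, ⟨w₀, hw₀⟩) with hp
    set x' : gluedVert r 2 t := Sum.inl (j, ⟨w₀ ++ [e], hw⟩) with hx'
    have hlfl : ∀ c : Fin t, (w₀ ++ [e] ++ [c]).length = r := by intro c; simp; omega
    set lf : Fin t → gluedVert r 2 t := fun c => Sum.inr ⟨w₀ ++ [e] ++ [c], hlfl c⟩ with hlf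
    have hpx : (gluedTree r 2 t).Adj p x := adj_inl_inl.mpr ⟨rfl, Or.inl ⟨_, rfl⟩⟩
    have hxlf : ∀ c, (gluedTree r 2 t).Adj x (lf c) := fun c => adj_inl_inr.mpr ⟨c, rfl⟩
    have hlfx' : ∀ c, (gluedTree r 2 t).Adj (lf c) x' := fun c => adj_inr_inl.mpr ⟨c, rfl⟩
    have hnadj_p_lf : ∀ c, ¬ (gluedTree r 2 t).Adj p (lf c) := fun c =>
      nadj_inl_inr_len (by simp only [List.length_append, List.length_cons, List.length_nil]; omega)
    have hxnep : x ≠ p := inl_ne_of_len (by simp)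
    have hxnelf : ∀ c, x ≠ lf c := fun c => by simp [hx, hlf]
    have hdist_p_lf : ∀ c, (gluedTree r 2 t).dist p (lf c) = 2 := fun c =>
      dist_eq_two (by simp [hp, hlf]) (hnadj_p_lf c) hpx (hxlf c)
    by_cases hpS : p ∈ S
    · -- p ∈ S : all leaves below x avoid S, siblings avoid S, then (leaf, sibling) fails
      have hlfS : ∀ c, lf c ∉ S := by
        intro c hcS
        obtain ⟨z, hz1, hz2, hzS⟩ := visible_two (hS.1 p hpS (lf c) hcS) (hdist_p_lf c)
        have hzx : z = x := cn_parent_leaf hw hz1.symm hz2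
        subst hzx
        rcases hzS hxS with h | h
        · exact hxnep h
        · exact hxnelf c h
      obtain ⟨b, hbe⟩ : ∃ b : Fin t, b ≠ e := by
        obtain ⟨b, hb⟩ := Fintype.exists_ne_of_one_lt_card (by simpa using h1t) e
        exact ⟨b, hb⟩
      have hlenb : (w₀ ++ [b]).length < r := by simp; omega
      set y : gluedVert r 2 t := Sum.inl (k, ⟨w₀ ++ [b], hlenb⟩) with hy
      have hpy : (gluedTree r 2 t).Adj p y := adj_inl_inl.mpr ⟨rfl, Or.inl ⟨_, rfl⟩⟩
      have hyS : y ∉ S := by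
        intro hyS
        have hxy : x ≠ y := by
          intro hc
          simp only [hx, hy, Sum.inl.injEq, Prod.mk.injEq, Subtype.mk.injEq] at hc
          exact hbe (snoc_inj hc.2).2.symm
        have hd2 : (gluedTree r 2 t).dist x y = 2 :=
          dist_eq_two hxy (nadj_same_len (by simp)) hpx.symm hpy
        obtain ⟨z, hz1, hz2, hzS⟩ := visible_two (hS.1 x hxS y hyS) hd2
        have hzp : z = p := cn_siblings (fun h => hbe h.symm) hw₀ hz1.symm hz2
        subst hzp
        rcases hzS hpS with h | h
        · exact hxnep h.symm
        · exact absurd h.symm (inl_ne_of_len (by simp))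
      -- the pair (lf 0, y) is outside S and blocked
      have hlfy : (gluedTree r 2 t).dist (lf ⟨0, h0t⟩) y = 3 := by
        refine dist_eq_three (by simp [hlf, hy]) ?_ ?_ (hxlf _).symm hpx.symm hpy
        · intro hadj
          obtain ⟨d, hd⟩ := adj_inr_inl.mp hadj
          obtain ⟨hd1, -⟩ := snoc_inj hd
          exact hbe (snoc_inj hd1).2.symm
        · intro z hz1 hz2
          obtain ⟨m, u, d, rfl, hud⟩ := adj_inr_iff.mp hz1.symm
          obtain ⟨hu, -⟩ := snoc_inj hud
          rw [adj_inl_inl] at hz2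
          obtain ⟨-, ⟨c', hc'⟩ | ⟨c', hc'⟩⟩ := hz2 <;>
          · rw [← hu] at hc'
            have := congrArg List.length hc'
            simp only [List.length_append, List.length_cons, List.length_nil] at this
            omega
      obtain ⟨z1, z2, hz1, hz2, hz3, hz1S, hz2S⟩ :=
        visible_three (hS.2 (lf ⟨0, h0t⟩) (hlfS _) y hyS) hlfy
      obtain ⟨m, u, d, rfl, hud⟩ := adj_inr_iff.mp hz1.symm
      obtain ⟨hu, -⟩ := snoc_inj hud
      have hueq : u = ⟨w₀ ++ [e], hw⟩ := Subtype.ext hu.symm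
      subst hueq
      rcases fin2_cases m k with rfl | rfl
      · -- z1 = x ∈ S
        rcases hz1S hxS with h | h
        · exact (hxnelf _) h
        · simp only [Sum.inl.injEq, Prod.mk.injEq, Subtype.mk.injEq, hy] at h
          exact hbe (snoc_inj h.2).2.symm
      · -- z1 = x', then no z2 exists
        have hz3' : (gluedTree r 2 t).Adj z2 (Sum.inl (k, ⟨w₀ ++ [b], hlenb⟩)) := hz3
        exact cn_sib_mirror_none hkj hbe.symm hz2.symm hz3'
    · -- p ∉ S : all leaves below x are in S, x' ∉ S, and the pair (p, x') fails
      have hlfS : ∀ c, lf c ∈ S := by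
        intro c
        by_contra hcS
        obtain ⟨z, hz1, hz2, hzS⟩ := visible_two (hS.2 p hpS (lf c) hcS) (hdist_p_lf c)
        have hzx : z = x := cn_parent_leaf hw hz1.symm hz2
        subst hzx
        rcases hzS hxS with h | h
        · exact hxnep h
        · exact hxnelf c h
      have hx'S : x' ∉ S := by
        intro hx'S
        have hxx' : x ≠ x' := by
          intro hc
          simp only [hx, hx', Sum.inl.injEq, Prod.mk.injEq] at hc
          exact hkj hc.1
        have hd2 : (gluedTree r 2 t).dist x x' = 2 :=
          dist_eq_two hxx' (nadj_inl_cross hkj) (hxlf ⟨0, h0t⟩) (hlfx' ⟨0, h0t⟩)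
        obtain ⟨z, hz1, hz2, hzS⟩ := visible_two (hS.1 x hxS x' hx'S) hd2
        obtain ⟨c, hc, rfl⟩ := cn_mirror hkj hz1.symm hz2
        rcases hzS (hlfS c) with h | h
        · exact (hxnelf c) h.symm
        · simp [hx'] at h
      -- pair (p, x')
      have hdp : (gluedTree r 2 t).dist p x' = 3 := by
        refine dist_eq_three ?_ (nadj_inl_cross hkj) ?_ hpx (hxlf ⟨0, h0t⟩) (hlfx' ⟨0, h0t⟩)
        · intro hc
          simp only [hp, hx', Sum.inl.injEq, Prod.mk.injEq] at hc
          exact hkj hc.1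
        · intro z hz1 hz2
          exact cn_cross_none hkj hz1.symm hz2
      obtain ⟨z1, z2, hz1, hz2, hz3, hz1S, hz2S⟩ :=
        visible_three (hS.2 p hpS x' hx'S) hdp
      -- z2 is adjacent to x'
      match z2, hz2, hz3, hz2S with
      | Sum.inr l, hz2, hz3, hz2S =>
        obtain ⟨c, hc⟩ := adj_inr_inl.mp (hz3.symm).symm
        have hleq : l = ⟨w₀ ++ [e] ++ [c], hlfl c⟩ := Subtype.ext hc
        subst hleq
        have hz1x : z1 = x := cn_parent_leaf hw hz1.symm hz2
        subst hz1x
        rcases hz1S hxS with h | h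
        · exact hxnep h
        · simp only [hx, hx', Sum.inl.injEq, Prod.mk.injEq] at h
          exact hkj h.1
      | Sum.inl (m, u), hz2, hz3, hz2S =>
        have hmj : m = j := by
          rcases adj_inl_inl.mp hz3 with ⟨h', -⟩
          exact h'
        subst hmj
        -- z1 adjacent to both p (copy k) and z2 (copy j): impossible
        match z1, hz1, hz2 with
        | Sum.inl (m', v), hz1, hz2 =>
          rcases adj_inl_inl.mp hz1.symm with ⟨h1, -⟩
          rcases adj_inl_inl.mp hz2 with ⟨h2, -⟩
          exact hkj (h1.symm.trans h2)
        | Sum.inr l', hz1, hz2 =>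
          exact (nadj_inl_inr_len (by simp [l'.prop]; omega)) hz1

end GT
namespace GT
open SimpleGraph
variable {r t : ℕ}

lemma dual_group_miss (hr : 2 ≤ r) (ht : 2 ≤ t) {S : Set (gluedVert r 2 t)}
    (hS : isDualMVSet (gluedTree r 2 t) S) (w : List (Fin t)) (hw1 : w.length + 1 = r) :
    ∃ (c : Fin t) (h : (w ++ [c]).length = r), Sum.inr ⟨w ++ [c], h⟩ ∉ S := by
  have h0t : 0 < t := by omega
  have hw : w.length < r := by omega
  have h01 : (0 : Fin 2) ≠ 1 := by decide
  set x0 : gluedVert r 2 t := Sum.inl (0, ⟨w, hw⟩) with hx0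
  set x1 : gluedVert r 2 t := Sum.inl (1, ⟨w, hw⟩) with hx1
  have hlen : (w ++ [(⟨0, h0t⟩ : Fin t)]).length = r := by simp; omega
  have hd2 : (gluedTree r 2 t).dist x0 x1 = 2 := by
    refine dist_eq_two (z := Sum.inr ⟨w ++ [⟨0, h0t⟩], hlen⟩) ?_ (nadj_inl_cross h01) ?_ ?_
    · intro hc; simp only [hx0, hx1, Sum.inl.injEq, Prod.mk.injEq] at hc; exact h01 hc.1
    · exact adj_inl_inr.mpr ⟨_, rfl⟩
    · exact adj_inr_inl.mpr ⟨_, rfl⟩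
  obtain ⟨z, hz1, hz2, hzS⟩ := visible_two
    (hS.2 x0 (dual_no_internal hr ht hS 0 _) x1 (dual_no_internal hr ht hS 1 _)) hd2
  obtain ⟨c, hc, rfl⟩ := cn_mirror h01 hz1.symm hz2
  refine ⟨c, hc, fun hzS' => ?_⟩
  rcases hzS hzS' with h | h <;> simp [hx0, hx1] at h

/-- The family of candidate extremal sets: all quasi-leaves except one per group. -/
def famSet (r t : ℕ) (f : {w : List (Fin t) // w.length = r - 1} → Fin t) :
    Set (gluedVert r 2 t) :=
  {x | ∃ (w : {w : List (Fin t) // w.length = r - 1}) (c : Fin t)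
    (h : (w.val ++ [c]).length = r), c ≠ f w ∧ x = Sum.inr ⟨w.val ++ [c], h⟩}

lemma dual_subset_famSet (hr : 2 ≤ r) (ht : 2 ≤ t) {S : Set (gluedVert r 2 t)}
    (hS : isDualMVSet (gluedTree r 2 t) S) :
    ∃ g, S ⊆ famSet r t g := by
  classical
  have key : ∀ w : {w : List (Fin t) // w.length = r - 1},
      ∃ c : Fin t, ∀ (h : (w.val ++ [c]).length = r), Sum.inr ⟨w.val ++ [c], h⟩ ∉ S := by
    intro w
    obtain ⟨c, h, hc⟩ := dual_group_miss hr ht hS w.val (by have := w.prop; omega)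
    exact ⟨c, fun h' => by convert hc⟩
  refine ⟨fun w => (key w).choose, fun x hx => ?_⟩
  match x with
  | Sum.inl (i, s) => exact absurd hx (dual_no_internal hr ht hS i s)
  | Sum.inr l =>
    have hlne : l.val ≠ [] := by
      intro h; have := l.prop; rw [h] at this; simp at this; omega
    have hwlen : l.val.dropLast.length = r - 1 := by
      have := l.prop; simp [List.length_dropLast, this]
    set w : {w : List (Fin t) // w.length = r - 1} := ⟨l.val.dropLast, hwlen⟩ with hwdef
    have hsplit : w.val ++ [l.val.getLast hlne] = l.val := List.dropLast_append_getLast hlne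
    have hlen : (w.val ++ [l.val.getLast hlne]).length = r := by rw [hsplit]; exact l.prop
    have hceq : l = ⟨w.val ++ [l.val.getLast hlne], hlen⟩ := Subtype.ext hsplit.symm
    refine ⟨w, l.val.getLast hlne, hlen, fun hc => ?_, congrArg Sum.inr hceq⟩
    have hc' : l.val.getLast hlne = (key w).choose := hc
    have hlen' : (w.val ++ [(key w).choose]).length = r := by rw [← hc']; exact hlen
    refine (key w).choose_spec hlen' ?_
    rw [show (⟨w.val ++ [(key w).choose], hlen'⟩ : {l : List (Fin t) // l.length = r}) = l from
      Subtype.ext (by show w.val ++ [(key w).choose] = l.val; rw [← hc']; exact hsplit)]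
    exact hx
end GT
namespace GT
open SimpleGraph
variable {r t : ℕ}

def listLenEquiv (α : Type*) (n : ℕ) : {l : List α // l.length = n} ≃ (Fin n → α) :=
  (⟨fun l => ⟨l.1, l.2⟩, fun v => ⟨v.1, v.2⟩, fun _ => rfl, fun _ => rfl⟩ :
    {l : List α // l.length = n} ≃ List.Vector α n).trans (Equiv.vectorEquivFin α n)

noncomputable instance listLenFintype (α : Type*) [Fintype α] (n : ℕ) :
    Fintype {l : List α // l.length = n} :=
  Fintype.ofEquiv _ (listLenEquiv α n).symm

lemma card_listLen (α : Type*) [Fintype α] (n : ℕ) :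
    Fintype.card {l : List α // l.length = n} = Fintype.card α ^ n := by
  classical
  rw [Fintype.card_congr (listLenEquiv α n)]
  simp [Fintype.card_fun]

lemma famSet_finite (f : {w : List (Fin t) // w.length = r - 1} → Fin t) :
    (famSet r t f).Finite := by
  apply (Set.finite_range (Sum.inr : {l : List (Fin t) // l.length = r} → gluedVert r 2 t)).subset
  rintro x ⟨w, c, h, hne, rfl⟩
  exact ⟨_, rfl⟩

lemma not_mem_famSet_excluded (f : {w : List (Fin t) // w.length = r - 1} → Fin t)
    (w : {w : List (Fin t) // w.length = r - 1}) (h : (w.val ++ [f w]).length = r) :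
    Sum.inr ⟨w.val ++ [f w], h⟩ ∉ famSet r t f := by
  rintro ⟨w', c', h', hne', heq⟩
  simp only [Sum.inr.injEq, Subtype.mk.injEq] at heq
  obtain ⟨h1, h2⟩ := snoc_inj heq
  have : w' = w := Subtype.ext h1.symm
  subst this
  exact hne' (h2.symm)

lemma famSet_ncard (hr : 2 ≤ r) (ht : 2 ≤ t)
    (f : {w : List (Fin t) // w.length = r - 1} → Fin t) :
    (famSet r t f).ncard = t ^ (r - 1) * (t - 1) := by
  classical
  set φ : (Σ w : {w : List (Fin t) // w.length = r - 1}, {c : Fin t // c ≠ f w}) → gluedVert r 2 t :=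
    fun p => Sum.inr ⟨p.1.val ++ [p.2.val], by simp [p.1.prop]; omega⟩ with hφ
  have hinj : Function.Injective φ := by
    rintro ⟨⟨w, hw⟩, ⟨c, hc⟩⟩ ⟨⟨w', hw'⟩, ⟨c', hc'⟩⟩ h
    simp only [hφ, Sum.inr.injEq, Subtype.mk.injEq] at h
    obtain ⟨h1, h2⟩ := snoc_inj h
    subst h1; subst h2; rfl
  have hrange : famSet r t f = Set.range φ := by
    ext x
    constructor
    · rintro ⟨w, c, h, hne, rfl⟩
      exact ⟨⟨w, ⟨c, hne⟩⟩, by simp [hφ]⟩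
    · rintro ⟨⟨w, c⟩, rfl⟩
      exact ⟨w, c.val, by simp [w.prop]; omega, c.prop, rfl⟩
  rw [hrange, ← Nat.card_coe_set_eq]
  rw [← Nat.card_congr (Equiv.ofInjective φ hinj)]
  rw [Nat.card_eq_fintype_card, Fintype.card_sigma]
  have hfib : ∀ w : {w : List (Fin t) // w.length = r - 1},
      Fintype.card {c : Fin t // c ≠ f w} = t - 1 := by
    intro w
    have : Fintype.card {c : Fin t // ¬ (c = f w)} = t - 1 := by
      rw [Fintype.card_subtype_compl]
      simp
    simpa using this
  simp only [hfib]
  rw [Finset.sum_const, Finset.card_univ]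
  rw [show Fintype.card {w : List (Fin t) // w.length = r - 1} = t ^ (r - 1) by
    rw [card_listLen]; simp]
  simp [Nat.smul_one_eq_cast]

lemma famSet_injective (hr : 2 ≤ r) :
    Function.Injective (famSet r t : _ → Set (gluedVert r 2 t)) := by
  intro f f' heq
  funext w
  by_contra hne
  have hlen : (w.val ++ [f' w]).length = r := by simp [w.prop]; omega
  have hmem : Sum.inr ⟨w.val ++ [f' w], hlen⟩ ∈ famSet r t f :=
    ⟨w, f' w, hlen, fun hc => hne hc.symm, rfl⟩
  rw [heq] at hmem
  exact not_mem_famSet_excluded f' w hlen hmem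
end GT
section Swap
open SimpleGraph Walk
variable {V : Type*} [DecidableEq V] {G : SimpleGraph V}

lemma swap_hom {a b : V} (hnadj : ¬ G.Adj a b)
    (hnbr : ∀ z, G.Adj z a ↔ G.Adj z b) {x y : V} (h : G.Adj x y) :
    G.Adj (Equiv.swap a b x) (Equiv.swap a b y) := by
  rcases eq_or_ne x a with rfl | hxa
  · rcases eq_or_ne y x with rfl | hya
    · exact absurd rfl h.ne
    · rcases eq_or_ne y b with rfl | hyb
      · exact absurd h hnadj
      · rw [Equiv.swap_apply_left, Equiv.swap_apply_of_ne_of_ne hya hyb]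
        exact ((hnbr y).mp h.symm).symm
  · rcases eq_or_ne x b with rfl | hxb
    · rcases eq_or_ne y a with rfl | hya
      · exact absurd h.symm hnadj
      · rcases eq_or_ne y x with rfl | hyb
        · exact absurd rfl h.ne
        · rw [Equiv.swap_apply_right, Equiv.swap_apply_of_ne_of_ne hya hyb]
          exact ((hnbr y).mpr h.symm).symm
    · rw [Equiv.swap_apply_of_ne_of_ne hxa hxb]
      rcases eq_or_ne y a with rfl | hya
      · rw [Equiv.swap_apply_left]; exact (hnbr x).mp h
      · rcases eq_or_ne y b with rfl | hyb
        · rw [Equiv.swap_apply_right]; exact (hnbr x).mpr h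
        · rw [Equiv.swap_apply_of_ne_of_ne hya hyb]; exact h

lemma dist_le_len {A B u : V} (hnbr : ∀ z, G.Adj z A → G.Adj z B) (hAu : A ≠ u)
    (p1 : G.Walk u A) : G.dist u B ≤ p1.length := by
  cases hrev : p1.reverse with
  | nil => exact absurd rfl hAu
  | cons hadj q =>
    have hBm : G.Adj B _ := (hnbr _ hadj.symm).symm
    have hle := SimpleGraph.dist_le ((Walk.cons hBm q).reverse)
    have h1 : p1.length = q.length + 1 := by
      rw [← SimpleGraph.Walk.length_reverse p1, hrev]; simp
    simpa [h1] using hle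

lemma partner_not_mem (hconn : G.Connected) {u v A B : V} {p : G.Walk u v}
    (hsp : p.length = G.dist u v) (hAB : A ≠ B) (hnadj : ¬ G.Adj A B)
    (hnbr : ∀ z, G.Adj z A → G.Adj z B)
    (hA : A ∈ p.support) (hAu : A ≠ u) (hAv : A ≠ v) : B ∉ p.support := by
  intro hB
  have hBA2 : 2 ≤ G.dist B A := by
    have hpos : 0 < G.dist B A := (hconn.preconnected B A).pos_dist_of_ne (Ne.symm hAB)
    have hne1 : G.dist B A ≠ 1 := fun hc =>
      hnadj (SimpleGraph.dist_eq_one_iff_adj.mp hc).symm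
    omega
  have hAB2 : 2 ≤ G.dist A B := by rwa [SimpleGraph.dist_comm] at hBA2
  have hsum : (p.takeUntil A hA).length + (p.dropUntil A hA).length = p.length := by
    have := congrArg Walk.length (p.take_spec hA)
    rwa [Walk.length_append] at this
  have tri : G.dist u v ≤ G.dist u B + G.dist B v := hconn.dist_triangle
  rw [← p.take_spec hA, Walk.mem_support_append_iff] at hB
  rcases hB with hB1 | hB2
  · -- B occurs before A
    set p1 := p.takeUntil A hA
    set p2 := p.dropUntil A hA
    have hs : (p1.takeUntil B hB1).length + (p1.dropUntil B hB1).length = p1.length := by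
      have := congrArg Walk.length (p1.take_spec hB1)
      rwa [Walk.length_append] at this
    have h1 : G.dist u B ≤ (p1.takeUntil B hB1).length := SimpleGraph.dist_le _
    have h2 : G.dist B A ≤ (p1.dropUntil B hB1).length := SimpleGraph.dist_le _
    have h3 : G.dist B v ≤ p2.length := by
      have := dist_le_len hnbr hAv p2.reverse
      rwa [Walk.length_reverse, SimpleGraph.dist_comm] at this
    omega
  · -- B occurs after A
    set p1 := p.takeUntil A hA
    set p2 := p.dropUntil A hA
    have hs : (p2.takeUntil B hB2).length + (p2.dropUntil B hB2).length = p2.length := by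
      have := congrArg Walk.length (p2.take_spec hB2)
      rwa [Walk.length_append] at this
    have h1 : G.dist A B ≤ (p2.takeUntil B hB2).length := SimpleGraph.dist_le _
    have h2 : G.dist B v ≤ (p2.dropUntil B hB2).length := SimpleGraph.dist_le _
    have h3 : G.dist u B ≤ p1.length := dist_le_len hnbr hAu p1
    omega

lemma countP_lt {α : Type*} {l : List α} {p q : α → Bool}
    (hpq : ∀ x ∈ l, p x → q x) {a : α} (ha : a ∈ l) (hpa : ¬ p a) (hqa : q a) :
    l.countP p < l.countP q := by
  induction l with
  | nil => simp at ha
  | cons b l ih =>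
    rw [List.countP_cons, List.countP_cons]
    rcases List.mem_cons.mp ha with rfl | ha'
    · have hmono : l.countP p ≤ l.countP q :=
        List.countP_mono_left (fun x hx => hpq x (List.mem_cons_of_mem _ hx))
      simp only [hqa, if_pos]
      rw [if_neg hpa]
      omega
    · have hbl : p b → q b := hpq b List.mem_cons_self
      have := ih (fun x hx => hpq x (List.mem_cons_of_mem _ hx)) ha'
      by_cases hpb : p b
      · rw [if_pos hpb, if_pos (hbl hpb)]; omega
      · rw [if_neg hpb]; split <;> omega

end Swap

namespace GT
open SimpleGraph Walk
variable {r t : ℕ}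

lemma adj_partner (h0 : 0 < r) {l l' : {l : List (Fin t) // l.length = r}}
    (hdrop : l.val.dropLast = l'.val.dropLast) :
    ∀ z, (gluedTree r 2 t).Adj z (Sum.inr l) → (gluedTree r 2 t).Adj z (Sum.inr l') := by
  intro z hz
  obtain ⟨i, s, b, rfl, hb⟩ := adj_inr_iff.mp hz
  have hl'ne : l'.val ≠ [] := by
    intro h; have := l'.prop; rw [h] at this; simp at this; omega
  have hs : s.val = l'.val.dropLast := by
    rw [← hdrop, hb]; simp
  refine adj_inl_inr.mpr ⟨l'.val.getLast hl'ne, ?_⟩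
  rw [hs]
  exact (List.dropLast_append_getLast hl'ne).symm

lemma exists_clean_path (hr : 2 ≤ r) {S : Set (gluedVert r 2 t)}
    (hSleaf : ∀ x ∈ S, ∃ (l : {l : List (Fin t) // l.length = r}), x = Sum.inr l)
    (hpartner : ∀ (l : {l : List (Fin t) // l.length = r}), Sum.inr l ∈ S →
      ∃ (l' : {l : List (Fin t) // l.length = r}), Sum.inr l' ∉ S ∧ l' ≠ l ∧
        l.val.dropLast = l'.val.dropLast)
    (ht : 2 ≤ t) : isTotalMVSet (gluedTree r 2 t) S := by
  classical
  have hconn : (gluedTree r 2 t).Connected := glued_connected (by omega) (by omega)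
  intro u v
  obtain ⟨p, hp⟩ := hconn.exists_walk_length_eq_dist u v
  suffices H : ∀ (n : ℕ) (p : (gluedTree r 2 t).Walk u v),
      p.length = (gluedTree r 2 t).dist u v →
      p.support.countP (fun x => decide (x ∈ S ∧ x ≠ u ∧ x ≠ v)) ≤ n →
      isVisible (gluedTree r 2 t) S u v from H _ p hp le_rfl
  intro n
  induction n with
  | zero =>
    intro p hlen hcount
    refine ⟨p, p.isPath_of_length_eq_dist hlen, hlen, ?_⟩
    intro w hw hwS
    by_contra hc
    push_neg at hc
    have : 0 < p.support.countP (fun x => decide (x ∈ S ∧ x ≠ u ∧ x ≠ v)) := by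
      rw [List.countP_pos_iff]
      exact ⟨w, hw, by simp [hwS, hc.1, hc.2]⟩
    omega
  | succ n ih =>
    intro p hlen hcount
    rcases Classical.em (∀ w ∈ p.support, w ∈ S → w = u ∨ w = v) with hclean | hclean
    · exact ⟨p, p.isPath_of_length_eq_dist hlen, hlen, hclean⟩
    push_neg at hclean
    obtain ⟨a, hasup, haS, hau, hav⟩ := hclean
    obtain ⟨l, rfl⟩ := hSleaf a haS
    obtain ⟨l', hl'S, hl'ne, hdrop⟩ := hpartner l haS
    set A : gluedVert r 2 t := Sum.inr l with hA
    set B : gluedVert r 2 t := Sum.inr l' with hB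
    have hABne : A ≠ B := fun hc => hl'ne (Sum.inr.inj hc).symm
    have hnadj : ¬ (gluedTree r 2 t).Adj A B := adj_inr_inr
    have hnbr1 : ∀ z, (gluedTree r 2 t).Adj z A → (gluedTree r 2 t).Adj z B :=
      adj_partner (by omega) hdrop
    have hnbr2 : ∀ z, (gluedTree r 2 t).Adj z B → (gluedTree r 2 t).Adj z A :=
      adj_partner (by omega) hdrop.symm
    have hnbr : ∀ z, (gluedTree r 2 t).Adj z A ↔ (gluedTree r 2 t).Adj z B :=
      fun z => ⟨hnbr1 z, hnbr2 z⟩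
    have hBnot : B ∉ p.support :=
      partner_not_mem hconn hlen hABne hnadj hnbr1 hasup hau hav
    set φ : (gluedTree r 2 t) →g (gluedTree r 2 t) :=
      ⟨Equiv.swap A B, fun h => swap_hom hnadj hnbr h⟩ with hφ
    have hu : φ u = u := Equiv.swap_apply_of_ne_of_ne (fun h => hau h.symm)
      (fun h => hBnot (h ▸ p.start_mem_support))
    have hv : φ v = v := Equiv.swap_apply_of_ne_of_ne (fun h => hav h.symm)
      (fun h => hBnot (h ▸ p.end_mem_support))
    set p2 : (gluedTree r 2 t).Walk u v := (p.map φ).copy hu hv with hp2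
    have hp2len : p2.length = (gluedTree r 2 t).dist u v := by
      rw [hp2, Walk.length_copy, Walk.length_map]; exact hlen
    refine ih p2 hp2len ?_
    have hsupp : p2.support = p.support.map φ := by
      rw [hp2, Walk.support_copy, Walk.support_map]
    rw [hsupp, List.countP_map]
    have hlt : p.support.countP
        ((fun x => decide (x ∈ S ∧ x ≠ u ∧ x ≠ v)) ∘ φ) <
        p.support.countP (fun x => decide (x ∈ S ∧ x ≠ u ∧ x ≠ v)) := by
      refine countP_lt ?_ hasup ?_ (by simp [haS, hau, hav])
      · intro x hx hpx
        simp only [Function.comp_apply, decide_eq_true_eq] at hpx ⊢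
        have hxB : x ≠ B := fun hc => hBnot (hc ▸ hx)
        by_cases hxA : x = A
        · subst hxA
          rw [show φ A = B from Equiv.swap_apply_left A B] at hpx
          exact absurd hpx.1 hl'S
        · rwa [show φ x = x from Equiv.swap_apply_of_ne_of_ne hxA hxB] at hpx
      · simp only [Function.comp_apply, decide_eq_true_eq]
        rw [show φ A = B from Equiv.swap_apply_left A B]
        intro hc
        exact hl'S hc.1
    omega

end GT
namespace GT
open SimpleGraph
variable {r t : ℕ}

lemma famSet_total (hr : 2 ≤ r) (ht : 2 ≤ t)
    (f : {w : List (Fin t) // w.length = r - 1} → Fin t) :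
    isTotalMVSet (gluedTree r 2 t) (famSet r t f) := by
  refine exists_clean_path hr ?_ ?_ ht
  · rintro x ⟨w, c, h, hne, rfl⟩
    exact ⟨⟨w.val ++ [c], h⟩, rfl⟩
  · rintro l hl
    obtain ⟨w, c, h, hne, heq⟩ := hl
    have hleq : l = ⟨w.val ++ [c], h⟩ := Sum.inr.inj heq
    have h' : (w.val ++ [f w]).length = r := by
      have := w.prop; simp; omega
    refine ⟨⟨w.val ++ [f w], h'⟩, not_mem_famSet_excluded f w h', ?_, ?_⟩
    · intro hc
      rw [hleq] at hc
      simp only [Subtype.mk.injEq] at hc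
      exact hne (snoc_inj hc).2.symm
    · rw [hleq]
      simp

lemma total_dual {V : Type*} {G : SimpleGraph V} {S : Set V}
    (h : isTotalMVSet G S) : isDualMVSet G S :=
  ⟨fun u _ v _ => h u v, fun u _ v _ => h u v⟩

lemma dual_ncard_le (hr : 2 ≤ r) (ht : 2 ≤ t) {S : Set (gluedVert r 2 t)}
    (hS : isDualMVSet (gluedTree r 2 t) S) : S.ncard ≤ t ^ (r - 1) * (t - 1) := by
  obtain ⟨g, hsub⟩ := dual_subset_famSet hr ht hS
  calc S.ncard ≤ (famSet r t g).ncard := Set.ncard_le_ncard hsub (famSet_finite g)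
    _ = t ^ (r - 1) * (t - 1) := famSet_ncard hr ht g

lemma dual_max_eq (hr : 2 ≤ r) (ht : 2 ≤ t) {S : Set (gluedVert r 2 t)}
    (hS : isDualMVSet (gluedTree r 2 t) S)
    (hcard : S.ncard = t ^ (r - 1) * (t - 1)) : ∃ f, S = famSet r t f := by
  obtain ⟨g, hsub⟩ := dual_subset_famSet hr ht hS
  exact ⟨g, Set.eq_of_subset_of_ncard_le hsub
    (by rw [famSet_ncard hr ht g, hcard]) (famSet_finite g)⟩

lemma range_famSet_ncard (hr : 2 ≤ r) (ht : 2 ≤ t) :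
    (Set.range (famSet r t)).ncard = t ^ t ^ (r - 1) := by
  classical
  rw [← Nat.card_coe_set_eq,
    Nat.card_congr (Equiv.ofInjective _ (famSet_injective (t := t) hr)).symm,
    Nat.card_eq_fintype_card, Fintype.card_fun, Fintype.card_fin, card_listLen]
  simp

lemma total_max_collection (hr : 2 ≤ r) (ht : 2 ≤ t) :
    {S : Set (gluedVert r 2 t) | isTotalMVSet (gluedTree r 2 t) S ∧
      ∀ T : Set (gluedVert r 2 t), isTotalMVSet (gluedTree r 2 t) T →
        T.ncard ≤ S.ncard} = Set.range (famSet r t) := by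
  have h0t : 0 < t := by omega
  ext S
  constructor
  · rintro ⟨hS, hmax⟩
    have hub : S.ncard ≤ t ^ (r - 1) * (t - 1) := dual_ncard_le hr ht (total_dual hS)
    have hlb : t ^ (r - 1) * (t - 1) ≤ S.ncard := by
      have := hmax (famSet r t (fun _ => ⟨0, h0t⟩)) (famSet_total hr ht _)
      rwa [famSet_ncard hr ht] at this
    obtain ⟨f, rfl⟩ := dual_max_eq hr ht (total_dual hS) (le_antisymm hub hlb)
    exact ⟨f, rfl⟩
  · rintro ⟨f, rfl⟩
    refine ⟨famSet_total hr ht f, fun T hT => ?_⟩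
    rw [famSet_ncard hr ht]
    exact dual_ncard_le hr ht (total_dual hT)

lemma dual_max_collection (hr : 2 ≤ r) (ht : 2 ≤ t) :
    {S : Set (gluedVert r 2 t) | isDualMVSet (gluedTree r 2 t) S ∧
      ∀ T : Set (gluedVert r 2 t), isDualMVSet (gluedTree r 2 t) T →
        T.ncard ≤ S.ncard} = Set.range (famSet r t) := by
  have h0t : 0 < t := by omega
  ext S
  constructor
  · rintro ⟨hS, hmax⟩
    have hub : S.ncard ≤ t ^ (r - 1) * (t - 1) := dual_ncard_le hr ht hS
    have hlb : t ^ (r - 1) * (t - 1) ≤ S.ncard := by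
      have := hmax (famSet r t (fun _ => ⟨0, h0t⟩))
        (total_dual (famSet_total hr ht _))
      rwa [famSet_ncard hr ht] at this
    obtain ⟨f, rfl⟩ := dual_max_eq hr ht hS (le_antisymm hub hlb)
    exact ⟨f, rfl⟩
  · rintro ⟨f, rfl⟩
    refine ⟨total_dual (famSet_total hr ht f), fun T hT => ?_⟩
    rw [famSet_ncard hr ht]
    exact dual_ncard_le hr ht hT

end GT


theorem stmt18 (r t : ℕ) (hr : 2 ≤ r) (ht : 2 ≤ t) :
    IsGreatest {k : ℕ | ∃ S : Set (gluedVert r 2 t),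
      isTotalMVSet (gluedTree r 2 t) S ∧ S.ncard = k} (t ^ (r - 1) * (t - 1)) ∧
    IsGreatest {k : ℕ | ∃ S : Set (gluedVert r 2 t),
      isDualMVSet (gluedTree r 2 t) S ∧ S.ncard = k} (t ^ (r - 1) * (t - 1)) ∧
    {S : Set (gluedVert r 2 t) | isTotalMVSet (gluedTree r 2 t) S ∧
        ∀ T : Set (gluedVert r 2 t), isTotalMVSet (gluedTree r 2 t) T →
          T.ncard ≤ S.ncard}.ncard = t ^ t ^ (r - 1) ∧
    {S : Set (gluedVert r 2 t) | isDualMVSet (gluedTree r 2 t) S ∧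
        ∀ T : Set (gluedVert r 2 t), isDualMVSet (gluedTree r 2 t) T →
          T.ncard ≤ S.ncard}.ncard = t ^ t ^ (r - 1) := by
  have h0t : 0 < t := by omega
  refine ⟨⟨⟨GT.famSet r t (fun _ => ⟨0, h0t⟩), GT.famSet_total hr ht _,
      GT.famSet_ncard hr ht _⟩, ?_⟩,
    ⟨⟨GT.famSet r t (fun _ => ⟨0, h0t⟩),
      GT.total_dual (GT.famSet_total hr ht _), GT.famSet_ncard hr ht _⟩, ?_⟩, ?_, ?_⟩
  · rintro k ⟨S, hS, rfl⟩
    exact GT.dual_ncard_le hr ht (GT.total_dual hS)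
  · rintro k ⟨S, hS, rfl⟩
    exact GT.dual_ncard_le hr ht hS
  · rw [GT.total_max_collection hr ht, GT.range_famSet_ncard hr ht]
  · rw [GT.dual_max_collection hr ht, GT.range_famSet_ncard hr ht]
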